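/- A point p = (x, y, s) ∈ Q(w̄,z̄) is an extreme point of the polytope P(w̄,z̄) = conv(Q(w̄,z̄)) if and only if p is a critical point of Q(w̄,z̄); that is, the set of extreme points of P(w̄,z̄) equals the set of critical points of Q(w̄,z̄). -/

import Mathlib

noncomputable section

/-- The primed bound `L'` obtained from a bound `L` and a fixed binary vector `b`:
it equals `L t` when `b t = 1` and `0` when `b t = 0`. -/
def primedBound (L : ℕ → ℝ) (b : ℕ → ℝ) : ℕ → ℝ := fun t => if b t = 1 then L t else 0

/-- Membership in the auxiliary feasible region `Q(w̄,z̄)` (primed bounds supplied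
as data).  Vectors are `ℕ`-indexed real sequences vanishing outside `{1,…,T}`,
with the stock carrying the initial stock `s0` at index `0`. -/
def Qwzmem (T : ℕ) (s0 : ℝ) (Ls Us Lx' Ux' Ly' Uy' : ℕ → ℝ)
    (x y s : ℕ → ℝ) : Prop :=
  s 0 = s0 ∧
  (∀ t, 1 ≤ t → t ≤ T →
    s t = s (t - 1) - y t + x t ∧
    x t * y t = 0 ∧
    Ls t ≤ s t ∧ s t ≤ Us t ∧
    Ly' t ≤ y t ∧ y t ≤ Uy' t ∧
    Lx' t ≤ x t ∧ x t ≤ Ux' t) ∧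
  (∀ t, ¬(1 ≤ t ∧ t ≤ T) → x t = 0 ∧ y t = 0 ∧ (t ≠ 0 → s t = 0))

def Qwz (T : ℕ) (s0 : ℝ) (Ls Us Lx' Ux' Ly' Uy' : ℕ → ℝ) :
    Set ((ℕ → ℝ) × (ℕ → ℝ) × (ℕ → ℝ)) :=
  {p | Qwzmem T s0 Ls Us Lx' Ux' Ly' Uy' p.1 p.2.1 p.2.2}

/-- The set `ET(p)` of stock-extreme time periods (together with `0`). -/
def stockExtremeTimes (T : ℕ) (Ls Us : ℕ → ℝ) (s : ℕ → ℝ) : Set ℕ :=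
  {0} ∪ {t | 1 ≤ t ∧ t ≤ T ∧ (s t = Ls t ∨ s t = Us t)}

/-- The set `ST(p)` of sub-extreme time periods. -/
def subExtremeTimes (T : ℕ) (Lx' Ux' Ly' Uy' : ℕ → ℝ) (x y : ℕ → ℝ) : Set ℕ :=
  {t | 1 ≤ t ∧ t ≤ T ∧
    ((Ly' t < y t ∧ y t < Uy' t) ∨ (Lx' t < x t ∧ x t < Ux' t))}

/-- `p = (x,y,s)` is a critical point: every stock-extreme interval `(a,b]`
(with `a,b` consecutive elements of `ET(p)`) contains at most one sub-extreme
time period, and the last interval `(max ET(p), T]` contains none. -/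
def IsCriticalPoint (T : ℕ) (Ls Us Lx' Ux' Ly' Uy' : ℕ → ℝ)
    (x y s : ℕ → ℝ) : Prop :=
  (∀ a ∈ stockExtremeTimes T Ls Us s, ∀ b ∈ stockExtremeTimes T Ls Us s,
    a < b → (∀ c ∈ stockExtremeTimes T Ls Us s, ¬(a < c ∧ c < b)) →
    (subExtremeTimes T Lx' Ux' Ly' Uy' x y ∩ Set.Ioc a b).Subsingleton) ∧
  subExtremeTimes T Lx' Ux' Ly' Uy' x y ∩
      Set.Ioc (sSup (stockExtremeTimes T Ls Us s)) T = ∅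

/-- The LP relaxation: `Qwzmem` without complementarity. -/
def Hmem (T : ℕ) (s0 : ℝ) (Ls Us Lx' Ux' Ly' Uy' : ℕ → ℝ)
    (x y s : ℕ → ℝ) : Prop :=
  s 0 = s0 ∧
  (∀ t, 1 ≤ t → t ≤ T →
    s t = s (t - 1) - y t + x t ∧
    Ls t ≤ s t ∧ s t ≤ Us t ∧
    Ly' t ≤ y t ∧ y t ≤ Uy' t ∧
    Lx' t ≤ x t ∧ x t ≤ Ux' t) ∧
  (∀ t, ¬(1 ≤ t ∧ t ≤ T) → x t = 0 ∧ y t = 0 ∧ (t ≠ 0 → s t = 0))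

lemma Q_subset_H (T : ℕ) (s0 : ℝ) (Ls Us Lx Ux Ly Uy : ℕ → ℝ) :
    Qwz T s0 Ls Us Lx Ux Ly Uy ⊆ {p | Hmem T s0 Ls Us Lx Ux Ly Uy p.1 p.2.1 p.2.2} := by
  rintro p ⟨h0, hmid, hout⟩
  exact ⟨h0, fun t h1 h2 => by
    obtain ⟨ha, _, hb⟩ := hmid t h1 h2; exact ⟨ha, hb⟩, hout⟩

lemma comb_le_aux {a b u v c : ℝ} (ha : 0 ≤ a) (hb : 0 ≤ b) (hab : a + b = 1)
    (h1 : c ≤ u) (h2 : c ≤ v) : c ≤ a * u + b * v := by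
  calc c = a * c + b * c := by rw [← add_mul, hab, one_mul]
    _ ≤ a * u + b * v :=
      add_le_add (mul_le_mul_of_nonneg_left h1 ha) (mul_le_mul_of_nonneg_left h2 hb)

lemma comb_ge_aux {a b u v c : ℝ} (ha : 0 ≤ a) (hb : 0 ≤ b) (hab : a + b = 1)
    (h1 : u ≤ c) (h2 : v ≤ c) : a * u + b * v ≤ c := by
  calc a * u + b * v ≤ a * c + b * c :=
      add_le_add (mul_le_mul_of_nonneg_left h1 ha) (mul_le_mul_of_nonneg_left h2 hb)
    _ = c := by rw [← add_mul, hab, one_mul]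

lemma H_convex (T : ℕ) (s0 : ℝ) (Ls Us Lx Ux Ly Uy : ℕ → ℝ) :
    Convex ℝ {p : (ℕ → ℝ) × (ℕ → ℝ) × (ℕ → ℝ) |
      Hmem T s0 Ls Us Lx Ux Ly Uy p.1 p.2.1 p.2.2} := by
  rintro p ⟨h0, hmid, hout⟩ q ⟨h0', hmid', hout'⟩ a b ha hb hab
  simp only [Set.mem_setOf_eq, Hmem, Prod.smul_snd, Prod.smul_fst, Prod.fst_add,
    Prod.snd_add, Pi.add_apply, Pi.smul_apply, smul_eq_mul]
  refine ⟨?_, fun t h1 h2 => ?_, fun t ht => ?_⟩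
  · rw [h0, h0', ← add_mul, hab, one_mul]
  · obtain ⟨e1, e2, e3, e4, e5, e6, e7⟩ := hmid t h1 h2
    obtain ⟨f1, f2, f3, f4, f5, f6, f7⟩ := hmid' t h1 h2
    refine ⟨by rw [e1, f1]; ring, comb_le_aux ha hb hab e2 f2, comb_ge_aux ha hb hab e3 f3,
      comb_le_aux ha hb hab e4 f4, comb_ge_aux ha hb hab e5 f5,
      comb_le_aux ha hb hab e6 f6, comb_ge_aux ha hb hab e7 f7⟩
  · obtain ⟨e1, e2, e3⟩ := hout t ht
    obtain ⟨f1, f2, f3⟩ := hout' t ht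
    refine ⟨by rw [e1, f1]; ring, by rw [e2, f2]; ring, fun h => by rw [e3 h, f3 h]; ring⟩

lemma telescope {T : ℕ} {s0 : ℝ} {Ls Us Lx Ux Ly Uy : ℕ → ℝ} {x y s : ℕ → ℝ}
    (h : Hmem T s0 Ls Us Lx Ux Ly Uy x y s) :
    ∀ a b : ℕ, a ≤ b → b ≤ T → s b = s a + ∑ r ∈ Finset.Ioc a b, (x r - y r) := by
  intro a b hab hbT
  induction b, hab using Nat.le_induction with
  | base => simp
  | succ b hab ih =>
    have hbT' : b ≤ T := by omega
    have hrec := (h.2.1 (b+1) (by omega) hbT).1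
    rw [Finset.sum_Ioc_succ_top hab, hrec]
    simp only [Nat.add_sub_cancel]
    rw [ih hbT']; ring

lemma ET_zero_mem (T : ℕ) (Ls Us : ℕ → ℝ) (s : ℕ → ℝ) :
    0 ∈ stockExtremeTimes T Ls Us s := Or.inl rfl

lemma ET_bddAbove (T : ℕ) (Ls Us : ℕ → ℝ) (s : ℕ → ℝ) :
    BddAbove (stockExtremeTimes T Ls Us s) := by
  refine ⟨T, ?_⟩
  rintro t (h | ⟨h1, h2, h3⟩)
  · simp at h; omega
  · exact h2

lemma ET_le_sSup {T : ℕ} {Ls Us : ℕ → ℝ} {s : ℕ → ℝ} {t : ℕ}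
    (h : t ∈ stockExtremeTimes T Ls Us s) : t ≤ sSup (stockExtremeTimes T Ls Us s) :=
  le_csSup (ET_bddAbove T Ls Us s) h

lemma ET_sSup_mem (T : ℕ) (Ls Us : ℕ → ℝ) (s : ℕ → ℝ) :
    sSup (stockExtremeTimes T Ls Us s) ∈ stockExtremeTimes T Ls Us s :=
  Nat.sSup_mem ⟨0, ET_zero_mem T Ls Us s⟩ (ET_bddAbove T Ls Us s)

lemma ET_mem_le_T {T : ℕ} {Ls Us : ℕ → ℝ} {s : ℕ → ℝ} {t : ℕ}
    (h : t ∈ stockExtremeTimes T Ls Us s) : t ≤ T := by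
  rcases h with h | ⟨_, h2, _⟩
  · simp at h; omega
  · exact h2

lemma comb_eq_of_le {u v p q c : ℝ} (hu : 0 < u) (hv : 0 < v) (huv : u + v = 1)
    (hp : c ≤ p) (hq : c ≤ q) (h : u * p + v * q = c) : p = c ∧ q = c := by
  have k1 : u * c ≤ u * p := mul_le_mul_of_nonneg_left hp hu.le
  have k2 : v * c ≤ v * q := mul_le_mul_of_nonneg_left hq hv.le
  have hcc : u * c + v * c = c := by rw [← add_mul, huv, one_mul]
  have e1 : u * p = u * c := by linarith
  have e2 : v * q = v * c := by linarith
  exact ⟨mul_left_cancel₀ hu.ne' e1, mul_left_cancel₀ hv.ne' e2⟩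

lemma comb_eq_of_ge {u v p q c : ℝ} (hu : 0 < u) (hv : 0 < v) (huv : u + v = 1)
    (hp : p ≤ c) (hq : q ≤ c) (h : u * p + v * q = c) : p = c ∧ q = c := by
  have k1 : u * p ≤ u * c := mul_le_mul_of_nonneg_left hp hu.le
  have k2 : v * q ≤ v * c := mul_le_mul_of_nonneg_left hq hv.le
  have hcc : u * c + v * c = c := by rw [← add_mul, huv, one_mul]
  have e1 : u * p = u * c := by linarith
  have e2 : v * q = v * c := by linarith
  exact ⟨mul_left_cancel₀ hu.ne' e1, mul_left_cancel₀ hv.ne' e2⟩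

lemma critical_mem_extremePoints
    {T : ℕ} {s0 : ℝ} {Ls Us Lx Ux Ly Uy : ℕ → ℝ}
    (hLx : ∀ t, 1 ≤ t → t ≤ T → 0 ≤ Lx t) (hLy : ∀ t, 1 ≤ t → t ≤ T → 0 ≤ Ly t)
    {p : (ℕ → ℝ) × (ℕ → ℝ) × (ℕ → ℝ)}
    (hp : p ∈ Qwz T s0 Ls Us Lx Ux Ly Uy)
    (hc : IsCriticalPoint T Ls Us Lx Ux Ly Uy p.1 p.2.1 p.2.2) :
    p ∈ Set.extremePoints ℝ (convexHull ℝ (Qwz T s0 Ls Us Lx Ux Ly Uy)) := by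
  obtain ⟨hs0, hmid, hout⟩ := hp
  have hpQ : p ∈ Qwz T s0 Ls Us Lx Ux Ly Uy := ⟨hs0, hmid, hout⟩
  have hpH : Hmem T s0 Ls Us Lx Ux Ly Uy p.1 p.2.1 p.2.2 :=
    Q_subset_H T s0 Ls Us Lx Ux Ly Uy hpQ
  refine mem_extremePoints.2 ⟨subset_convexHull ℝ _ hpQ, ?_⟩
  intro q hq r hr hseg
  obtain ⟨u, v, hu, hv, huv, hcomb⟩ := hseg
  have hqH : Hmem T s0 Ls Us Lx Ux Ly Uy q.1 q.2.1 q.2.2 :=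
    convexHull_min (Q_subset_H T s0 Ls Us Lx Ux Ly Uy) (H_convex T s0 Ls Us Lx Ux Ly Uy) hq
  have hrH : Hmem T s0 Ls Us Lx Ux Ly Uy r.1 r.2.1 r.2.2 :=
    convexHull_min (Q_subset_H T s0 Ls Us Lx Ux Ly Uy) (H_convex T s0 Ls Us Lx Ux Ly Uy) hr
  obtain ⟨q0, qmid, qout⟩ := hqH
  obtain ⟨r0, rmid, rout⟩ := hrH
  have hqH' : Hmem T s0 Ls Us Lx Ux Ly Uy q.1 q.2.1 q.2.2 := ⟨q0, qmid, qout⟩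
  have hrH' : Hmem T s0 Ls Us Lx Ux Ly Uy r.1 r.2.1 r.2.2 := ⟨r0, rmid, rout⟩
  have hX : ∀ t, u * q.1 t + v * r.1 t = p.1 t := by
    intro t; have := congrArg (fun z : (ℕ → ℝ) × (ℕ → ℝ) × (ℕ → ℝ) => z.1 t) hcomb
    simpa using this
  have hY : ∀ t, u * q.2.1 t + v * r.2.1 t = p.2.1 t := by
    intro t; have := congrArg (fun z : (ℕ → ℝ) × (ℕ → ℝ) × (ℕ → ℝ) => z.2.1 t) hcomb
    simpa using this
  have hS : ∀ t, u * q.2.2 t + v * r.2.2 t = p.2.2 t := by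
    intro t; have := congrArg (fun z : (ℕ → ℝ) × (ℕ → ℝ) × (ℕ → ℝ) => z.2.2 t) hcomb
    simpa using this
  have fixX : ∀ t, 1 ≤ t → t ≤ T → (p.1 t = Lx t ∨ p.1 t = Ux t) →
      q.1 t = p.1 t ∧ r.1 t = p.1 t := by
    intro t h1 h2 hcase
    rcases hcase with hL | hU
    · have := comb_eq_of_le hu hv huv (qmid t h1 h2).2.2.2.2.2.1
        (rmid t h1 h2).2.2.2.2.2.1 ((hX t).trans hL)
      exact ⟨this.1.trans hL.symm, this.2.trans hL.symm⟩
    · have := comb_eq_of_ge hu hv huv (qmid t h1 h2).2.2.2.2.2.2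
        (rmid t h1 h2).2.2.2.2.2.2 ((hX t).trans hU)
      exact ⟨this.1.trans hU.symm, this.2.trans hU.symm⟩
  have fixY : ∀ t, 1 ≤ t → t ≤ T → (p.2.1 t = Ly t ∨ p.2.1 t = Uy t) →
      q.2.1 t = p.2.1 t ∧ r.2.1 t = p.2.1 t := by
    intro t h1 h2 hcase
    rcases hcase with hL | hU
    · have := comb_eq_of_le hu hv huv (qmid t h1 h2).2.2.2.1
        (rmid t h1 h2).2.2.2.1 ((hY t).trans hL)
      exact ⟨this.1.trans hL.symm, this.2.trans hL.symm⟩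
    · have := comb_eq_of_ge hu hv huv (qmid t h1 h2).2.2.2.2.1
        (rmid t h1 h2).2.2.2.2.1 ((hY t).trans hU)
      exact ⟨this.1.trans hU.symm, this.2.trans hU.symm⟩
  have fixS : ∀ c ∈ stockExtremeTimes T Ls Us p.2.2,
      q.2.2 c = p.2.2 c ∧ r.2.2 c = p.2.2 c := by
    rintro c (hc0 | ⟨h1, h2, hcase⟩)
    · have hc0' : c = 0 := hc0
      subst hc0'
      exact ⟨q0.trans hs0.symm, r0.trans hs0.symm⟩
    · rcases hcase with hL | hU
      · have := comb_eq_of_le hu hv huv (qmid c h1 h2).2.1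
          (rmid c h1 h2).2.1 ((hS c).trans hL)
        exact ⟨this.1.trans hL.symm, this.2.trans hL.symm⟩
      · have := comb_eq_of_ge hu hv huv (qmid c h1 h2).2.2.1
          (rmid c h1 h2).2.2.1 ((hS c).trans hU)
        exact ⟨this.1.trans hU.symm, this.2.trans hU.symm⟩
  have fixNotST : ∀ t, 1 ≤ t → t ≤ T →
      t ∉ subExtremeTimes T Lx Ux Ly Uy p.1 p.2.1 →
      q.1 t = p.1 t ∧ r.1 t = p.1 t ∧ q.2.1 t = p.2.1 t ∧ r.2.1 t = p.2.1 t := by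
    intro t h1 h2 hst
    have hnot : ¬((Ly t < p.2.1 t ∧ p.2.1 t < Uy t) ∨ (Lx t < p.1 t ∧ p.1 t < Ux t)) :=
      fun h => hst ⟨h1, h2, h⟩
    push_neg at hnot
    obtain ⟨e1, e2, e3, e4, e5, e6, e7, e8⟩ := hmid t h1 h2
    have hyb : p.2.1 t = Ly t ∨ p.2.1 t = Uy t := by
      rcases eq_or_lt_of_le e5 with h | h
      · exact Or.inl h.symm
      · exact Or.inr (le_antisymm e6 (hnot.1 h))
    have hxb : p.1 t = Lx t ∨ p.1 t = Ux t := by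
      rcases eq_or_lt_of_le e7 with h | h
      · exact Or.inl h.symm
      · exact Or.inr (le_antisymm e8 (hnot.2 h))
    obtain ⟨k1, k2⟩ := fixX t h1 h2 hxb
    obtain ⟨k3, k4⟩ := fixY t h1 h2 hyb
    exact ⟨k1, k2, k3, k4⟩
  have key : ∀ t, 1 ≤ t → t ≤ T →
      q.1 t = p.1 t ∧ r.1 t = p.1 t ∧ q.2.1 t = p.2.1 t ∧ r.2.1 t = p.2.1 t := by
    intro t h1 h2
    by_cases hst : t ∈ subExtremeTimes T Lx Ux Ly Uy p.1 p.2.1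
    · -- sub-extreme time: locate the stock-extreme interval
      have htM : t ≤ sSup (stockExtremeTimes T Ls Us p.2.2) := by
        by_contra hgt
        have hmem : t ∈ subExtremeTimes T Lx Ux Ly Uy p.1 p.2.1 ∩
            Set.Ioc (sSup (stockExtremeTimes T Ls Us p.2.2)) T :=
          ⟨hst, by omega, h2⟩
        rw [hc.2] at hmem
        exact hmem
      have hAne : ({c | c ∈ stockExtremeTimes T Ls Us p.2.2 ∧ c < t} : Set ℕ).Nonempty :=
        ⟨0, ET_zero_mem T Ls Us p.2.2, by omega⟩
      have hAbdd : BddAbove {c | c ∈ stockExtremeTimes T Ls Us p.2.2 ∧ c < t} :=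
        ⟨t, fun c hc => hc.2.le⟩
      obtain ⟨a, haET, hat, haMax⟩ :
          ∃ a, a ∈ stockExtremeTimes T Ls Us p.2.2 ∧ a < t ∧
            ∀ c ∈ stockExtremeTimes T Ls Us p.2.2, c < t → c ≤ a := by
        obtain ⟨h1', h2'⟩ := Nat.sSup_mem hAne hAbdd
        exact ⟨_, h1', h2', fun c hcm hlt => le_csSup hAbdd ⟨hcm, hlt⟩⟩
      have hBne : ({c | c ∈ stockExtremeTimes T Ls Us p.2.2 ∧ t ≤ c} : Set ℕ).Nonempty :=
        ⟨sSup (stockExtremeTimes T Ls Us p.2.2), ET_sSup_mem T Ls Us p.2.2, htM⟩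
      obtain ⟨b, hbET, htb, hbMin⟩ :
          ∃ b, b ∈ stockExtremeTimes T Ls Us p.2.2 ∧ t ≤ b ∧
            ∀ c ∈ stockExtremeTimes T Ls Us p.2.2, t ≤ c → b ≤ c := by
        obtain ⟨h1', h2'⟩ := Nat.sInf_mem hBne
        exact ⟨_, h1', h2', fun c hcm hle => Nat.sInf_le ⟨hcm, hle⟩⟩
      have hcons : ∀ c ∈ stockExtremeTimes T Ls Us p.2.2, ¬(a < c ∧ c < b) := by
        rintro c hcm ⟨hac, hcb⟩
        rcases lt_or_ge c t with h | h
        · exact absurd (haMax c hcm h) (by omega)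
        · exact absurd (hbMin c hcm h) (by omega)
      have hsub := hc.1 a haET b hbET (by omega) hcons
      have htIoc : t ∈ Set.Ioc a b := ⟨hat, htb⟩
      have hbT : b ≤ T := ET_mem_le_T hbET
      have hfix_other : ∀ c, a < c → c ≤ b → c ≠ t →
          q.1 c = p.1 c ∧ r.1 c = p.1 c ∧ q.2.1 c = p.2.1 c ∧ r.2.1 c = p.2.1 c := by
        intro c hac hcb hct
        refine fixNotST c (by omega) (le_trans hcb hbT) fun hmem => hct (hsub ⟨hmem, hac, hcb⟩ ⟨hst, htIoc⟩)
      have hsa := fixS a haET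
      have hsb := fixS b hbET
      have tq := telescope hqH' a b (by omega) hbT
      have tr := telescope hrH' a b (by omega) hbT
      have tp := telescope hpH a b (by omega) hbT
      have htmem : t ∈ Finset.Ioc a b := Finset.mem_Ioc.2 ⟨hat, htb⟩
      have herase_q : ∑ c ∈ (Finset.Ioc a b).erase t, (q.1 c - q.2.1 c)
          = ∑ c ∈ (Finset.Ioc a b).erase t, (p.1 c - p.2.1 c) := by
        refine Finset.sum_congr rfl fun c hcm => ?_
        obtain ⟨hct, hcIoc⟩ := Finset.mem_erase.1 hcm
        obtain ⟨hac, hcb⟩ := Finset.mem_Ioc.1 hcIoc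
        obtain ⟨k1, _, k3, _⟩ := hfix_other c hac hcb hct
        rw [k1, k3]
      have herase_r : ∑ c ∈ (Finset.Ioc a b).erase t, (r.1 c - r.2.1 c)
          = ∑ c ∈ (Finset.Ioc a b).erase t, (p.1 c - p.2.1 c) := by
        refine Finset.sum_congr rfl fun c hcm => ?_
        obtain ⟨hct, hcIoc⟩ := Finset.mem_erase.1 hcm
        obtain ⟨hac, hcb⟩ := Finset.mem_Ioc.1 hcIoc
        obtain ⟨_, k2, _, k4⟩ := hfix_other c hac hcb hct
        rw [k2, k4]
      have hq_split := Finset.add_sum_erase (Finset.Ioc a b) (fun c => q.1 c - q.2.1 c) htmem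
      have hr_split := Finset.add_sum_erase (Finset.Ioc a b) (fun c => r.1 c - r.2.1 c) htmem
      have hp_split := Finset.add_sum_erase (Finset.Ioc a b) (fun c => p.1 c - p.2.1 c) htmem
      have hkq : q.1 t - q.2.1 t = p.1 t - p.2.1 t := by
        have e1 : q.2.2 b = q.2.2 a + ∑ c ∈ Finset.Ioc a b, (q.1 c - q.2.1 c) := tq
        have e2 : p.2.2 b = p.2.2 a + ∑ c ∈ Finset.Ioc a b, (p.1 c - p.2.1 c) := tp
        rw [hsa.1, hsb.1] at e1
        have hsums : ∑ c ∈ Finset.Ioc a b, (q.1 c - q.2.1 c)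
            = ∑ c ∈ Finset.Ioc a b, (p.1 c - p.2.1 c) := by linarith
        rw [← hq_split, ← hp_split, herase_q] at hsums
        beta_reduce at hsums
        linarith
      have hkr : r.1 t - r.2.1 t = p.1 t - p.2.1 t := by
        have e1 : r.2.2 b = r.2.2 a + ∑ c ∈ Finset.Ioc a b, (r.1 c - r.2.1 c) := tr
        have e2 : p.2.2 b = p.2.2 a + ∑ c ∈ Finset.Ioc a b, (p.1 c - p.2.1 c) := tp
        rw [hsa.2, hsb.2] at e1
        have hsums : ∑ c ∈ Finset.Ioc a b, (r.1 c - r.2.1 c)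
            = ∑ c ∈ Finset.Ioc a b, (p.1 c - p.2.1 c) := by linarith
        rw [← hr_split, ← hp_split, herase_r] at hsums
        beta_reduce at hsums
        linarith
      obtain ⟨e1, e2, e3, e4, e5, e6, e7, e8⟩ := hmid t h1 h2
      obtain ⟨_, _, hfrac⟩ := hst
      rcases hfrac with hyf | hxf
      · -- y fractional at t, hence x t = 0 = Lx t
        have hy0 : 0 < p.2.1 t := lt_of_le_of_lt (hLy t h1 h2) hyf.1
        have hx0 : p.1 t = 0 := by
          rcases mul_eq_zero.1 e2 with h | h
          · exact h
          · exact absurd h hy0.ne'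
        have hLx0 : Lx t = 0 := le_antisymm (hx0 ▸ e7) (hLx t h1 h2)
        obtain ⟨k1, k2⟩ := fixX t h1 h2 (Or.inl (hx0.trans hLx0.symm))
        exact ⟨k1, k2, by linarith, by linarith⟩
      · -- x fractional at t, hence y t = 0 = Ly t
        have hx0 : 0 < p.1 t := lt_of_le_of_lt (hLx t h1 h2) hxf.1
        have hy0 : p.2.1 t = 0 := by
          rcases mul_eq_zero.1 e2 with h | h
          · exact absurd h hx0.ne'
          · exact h
        have hLy0 : Ly t = 0 := le_antisymm (hy0 ▸ e5) (hLy t h1 h2)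
        obtain ⟨k3, k4⟩ := fixY t h1 h2 (Or.inl (hy0.trans hLy0.symm))
        exact ⟨by linarith, by linarith, k3, k4⟩
    · exact fixNotST t h1 h2 hst
  have hxq : q.1 = p.1 := funext fun t => by
    by_cases h : 1 ≤ t ∧ t ≤ T
    · exact (key t h.1 h.2).1
    · rw [(qout t h).1, (hout t h).1]
  have hxr : r.1 = p.1 := funext fun t => by
    by_cases h : 1 ≤ t ∧ t ≤ T
    · exact (key t h.1 h.2).2.1
    · rw [(rout t h).1, (hout t h).1]
  have hyq : q.2.1 = p.2.1 := funext fun t => by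
    by_cases h : 1 ≤ t ∧ t ≤ T
    · exact (key t h.1 h.2).2.2.1
    · rw [(qout t h).2.1, (hout t h).2.1]
  have hyr : r.2.1 = p.2.1 := funext fun t => by
    by_cases h : 1 ≤ t ∧ t ≤ T
    · exact (key t h.1 h.2).2.2.2
    · rw [(rout t h).2.1, (hout t h).2.1]
  have hsq : q.2.2 = p.2.2 := funext fun t => by
    induction t with
    | zero => rw [q0, hs0]
    | succ n ih =>
      by_cases h : n + 1 ≤ T
      · have e := (qmid (n+1) (by omega) h).1
        have e' := (hmid (n+1) (by omega) h).1
        simp only [Nat.add_sub_cancel] at e e'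
        rw [e, e', ih, hxq, hyq]
      · rw [(qout (n+1) (by omega)).2.2 (by omega), (hout (n+1) (by omega)).2.2 (by omega)]
  have hsr : r.2.2 = p.2.2 := funext fun t => by
    induction t with
    | zero => rw [r0, hs0]
    | succ n ih =>
      by_cases h : n + 1 ≤ T
      · have e := (rmid (n+1) (by omega) h).1
        have e' := (hmid (n+1) (by omega) h).1
        simp only [Nat.add_sub_cancel] at e e'
        rw [e, e', ih, hxr, hyr]
      · rw [(rout (n+1) (by omega)).2.2 (by omega), (hout (n+1) (by omega)).2.2 (by omega)]
  constructor
  · exact Prod.ext hxq (Prod.ext hyq hsq)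
  · exact Prod.ext hxr (Prod.ext hyr hsr)

lemma pert_mem {T : ℕ} (hT : 1 ≤ T) {s0 : ℝ} {Ls Us Lx Ux Ly Uy : ℕ → ℝ} {x y s : ℕ → ℝ}
    (hp : Qwzmem T s0 Ls Us Lx Ux Ly Uy x y s) (dx dy ds : ℕ → ℝ)
    (hdout : ∀ t, ¬(1 ≤ t ∧ t ≤ T) → dx t = 0 ∧ dy t = 0 ∧ ds t = 0)
    (hdrec : ∀ t, 1 ≤ t → t ≤ T → ds t = ds (t-1) - dy t + dx t)
    (hdx : ∀ t, 1 ≤ t → t ≤ T → dx t ≠ 0 → (Lx t < x t ∧ x t < Ux t ∧ y t = 0 ∧ dy t = 0))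
    (hdy : ∀ t, 1 ≤ t → t ≤ T → dy t ≠ 0 → (Ly t < y t ∧ y t < Uy t ∧ x t = 0 ∧ dx t = 0))
    (hds : ∀ t, 1 ≤ t → t ≤ T → ds t ≠ 0 → Ls t < s t ∧ s t < Us t)
    (hbd : ∀ t, |dx t| ≤ 1 ∧ |dy t| ≤ 1 ∧ |ds t| ≤ 1) :
    ∃ ε : ℝ, 0 < ε ∧ ∀ δ : ℝ, |δ| ≤ ε →
      Qwzmem T s0 Ls Us Lx Ux Ly Uy (fun t => x t + δ * dx t) (fun t => y t + δ * dy t)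
        (fun t => s t + δ * ds t) := by
  classical
  obtain ⟨hs0, hmid, hout⟩ := hp
  set g : ℕ → ℝ := fun t =>
    min (if dx t = 0 then 1 else min (x t - Lx t) (Ux t - x t))
      (min (if dy t = 0 then 1 else min (y t - Ly t) (Uy t - y t))
        (if ds t = 0 then 1 else min (s t - Ls t) (Us t - s t))) with hg
  have hne : (Finset.Icc 1 T).Nonempty := ⟨1, Finset.mem_Icc.2 ⟨le_refl 1, hT⟩⟩
  set ε := (Finset.Icc 1 T).inf' hne g with hε
  have hgpos : ∀ t ∈ Finset.Icc 1 T, 0 < g t := by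
    intro t ht
    obtain ⟨h1, h2⟩ := Finset.mem_Icc.1 ht
    refine lt_min ?_ (lt_min ?_ ?_)
    · split_ifs with h
      · norm_num
      · obtain ⟨k1, k2, _, _⟩ := hdx t h1 h2 h
        exact lt_min (by linarith) (by linarith)
    · split_ifs with h
      · norm_num
      · obtain ⟨k1, k2, _, _⟩ := hdy t h1 h2 h
        exact lt_min (by linarith) (by linarith)
    · split_ifs with h
      · norm_num
      · obtain ⟨k1, k2⟩ := hds t h1 h2 h
        exact lt_min (by linarith) (by linarith)
  have hεpos : 0 < ε := (Finset.lt_inf'_iff hne).2 hgpos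
  refine ⟨ε, hεpos, fun δ hδ => ?_⟩
  have hslack : ∀ t, 1 ≤ t → t ≤ T →
      (dx t ≠ 0 → Lx t ≤ x t + δ * dx t ∧ x t + δ * dx t ≤ Ux t) ∧
      (dy t ≠ 0 → Ly t ≤ y t + δ * dy t ∧ y t + δ * dy t ≤ Uy t) ∧
      (ds t ≠ 0 → Ls t ≤ s t + δ * ds t ∧ s t + δ * ds t ≤ Us t) := by
    intro t h1 h2
    have hgle : ε ≤ g t := Finset.inf'_le g (Finset.mem_Icc.2 ⟨h1, h2⟩)
    have habs : ∀ d : ℝ, |d| ≤ 1 → |δ * d| ≤ ε := by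
      intro d hd
      rw [abs_mul]
      calc |δ| * |d| ≤ |δ| * 1 := mul_le_mul_of_nonneg_left hd (abs_nonneg δ)
        _ = |δ| := mul_one _
        _ ≤ ε := hδ
    have hA : ε ≤ (if dx t = 0 then 1 else min (x t - Lx t) (Ux t - x t)) :=
      le_trans hgle (min_le_left _ _)
    have hB : ε ≤ (if dy t = 0 then 1 else min (y t - Ly t) (Uy t - y t)) :=
      le_trans hgle (le_trans (min_le_right _ _) (min_le_left _ _))
    have hC : ε ≤ (if ds t = 0 then 1 else min (s t - Ls t) (Us t - s t)) :=
      le_trans hgle (le_trans (min_le_right _ _) (min_le_right _ _))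
    refine ⟨fun h => ?_, fun h => ?_, fun h => ?_⟩
    · rw [if_neg h] at hA
      have k := habs (dx t) (hbd t).1
      have e1 : |δ * dx t| ≤ x t - Lx t := le_trans k (le_trans hA (min_le_left _ _))
      have e2 : |δ * dx t| ≤ Ux t - x t := le_trans k (le_trans hA (min_le_right _ _))
      have e3 := neg_abs_le (δ * dx t)
      have e4 := le_abs_self (δ * dx t)
      exact ⟨by linarith, by linarith⟩
    · rw [if_neg h] at hB
      have k := habs (dy t) (hbd t).2.1
      have e1 : |δ * dy t| ≤ y t - Ly t := le_trans k (le_trans hB (min_le_left _ _))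
      have e2 : |δ * dy t| ≤ Uy t - y t := le_trans k (le_trans hB (min_le_right _ _))
      have e3 := neg_abs_le (δ * dy t)
      have e4 := le_abs_self (δ * dy t)
      exact ⟨by linarith, by linarith⟩
    · rw [if_neg h] at hC
      have k := habs (ds t) (hbd t).2.2
      have e1 : |δ * ds t| ≤ s t - Ls t := le_trans k (le_trans hC (min_le_left _ _))
      have e2 : |δ * ds t| ≤ Us t - s t := le_trans k (le_trans hC (min_le_right _ _))
      have e3 := neg_abs_le (δ * ds t)
      have e4 := le_abs_self (δ * ds t)
      exact ⟨by linarith, by linarith⟩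
  refine ⟨?_, fun t h1 h2 => ?_, fun t ht => ?_⟩
  · have h0 := (hdout 0 (by omega)).2.2
    simp only [h0, mul_zero, add_zero]
    exact hs0
  · obtain ⟨e1, e2, e3, e4, e5, e6, e7, e8⟩ := hmid t h1 h2
    obtain ⟨gx, gy, gs⟩ := hslack t h1 h2
    beta_reduce
    refine ⟨by rw [e1, hdrec t h1 h2]; ring, ?_, ?_, ?_, ?_, ?_, ?_, ?_⟩
    · rcases eq_or_ne (dx t) 0 with hx | hx
      · rcases eq_or_ne (dy t) 0 with hy | hy
        · rw [hx, hy]; simpa using e2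
        · obtain ⟨_, _, k3, k4⟩ := hdy t h1 h2 hy
          rw [k3, k4]; ring
      · obtain ⟨_, _, k3, k4⟩ := hdx t h1 h2 hx
        rw [k3, k4]; ring
    · rcases eq_or_ne (ds t) 0 with h | h
      · rw [h]; simpa using e3
      · exact (gs h).1
    · rcases eq_or_ne (ds t) 0 with h | h
      · rw [h]; simpa using e4
      · exact (gs h).2
    · rcases eq_or_ne (dy t) 0 with h | h
      · rw [h]; simpa using e5
      · exact (gy h).1
    · rcases eq_or_ne (dy t) 0 with h | h
      · rw [h]; simpa using e6
      · exact (gy h).2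
    · rcases eq_or_ne (dx t) 0 with h | h
      · rw [h]; simpa using e7
      · exact (gx h).1
    · rcases eq_or_ne (dx t) 0 with h | h
      · rw [h]; simpa using e8
      · exact (gx h).2
  · obtain ⟨e1, e2, e3⟩ := hout t ht
    obtain ⟨f1, f2, f3⟩ := hdout t ht
    beta_reduce
    exact ⟨by rw [e1, f1]; ring, by rw [e2, f2]; ring, fun h => by rw [e3 h, f3]; ring⟩

lemma not_extreme_of_pert {T : ℕ} {s0 : ℝ} {Ls Us Lx Ux Ly Uy : ℕ → ℝ}
    {p : (ℕ → ℝ) × (ℕ → ℝ) × (ℕ → ℝ)} (dx dy ds : ℕ → ℝ)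
    (hpert : ∃ ε : ℝ, 0 < ε ∧ ∀ δ : ℝ, |δ| ≤ ε →
      Qwzmem T s0 Ls Us Lx Ux Ly Uy (fun t => p.1 t + δ * dx t)
        (fun t => p.2.1 t + δ * dy t) (fun t => p.2.2 t + δ * ds t))
    (hne : ∃ t0, dx t0 ≠ 0 ∨ dy t0 ≠ 0) :
    p ∉ Set.extremePoints ℝ (convexHull ℝ (Qwz T s0 Ls Us Lx Ux Ly Uy)) := by
  intro hext
  obtain ⟨ε, hε, hδ⟩ := hpert
  obtain ⟨t0, hne0⟩ := hne
  rw [mem_extremePoints] at hext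
  set q1 : (ℕ → ℝ) × (ℕ → ℝ) × (ℕ → ℝ) :=
    (fun t => p.1 t + (-ε) * dx t, fun t => p.2.1 t + (-ε) * dy t,
      fun t => p.2.2 t + (-ε) * ds t) with hq1
  set q2 : (ℕ → ℝ) × (ℕ → ℝ) × (ℕ → ℝ) :=
    (fun t => p.1 t + ε * dx t, fun t => p.2.1 t + ε * dy t,
      fun t => p.2.2 t + ε * ds t) with hq2
  have h1 : q1 ∈ Qwz T s0 Ls Us Lx Ux Ly Uy :=
    hδ (-ε) (by rw [abs_neg, abs_of_pos hε])
  have h2 : q2 ∈ Qwz T s0 Ls Us Lx Ux Ly Uy := hδ ε (by rw [abs_of_pos hε])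
  have hseg : p ∈ openSegment ℝ q1 q2 := by
    refine ⟨1/2, 1/2, by norm_num, by norm_num, by norm_num, ?_⟩
    refine Prod.ext ?_ (Prod.ext ?_ ?_) <;> funext t <;>
      simp only [hq1, hq2, Prod.smul_fst, Prod.smul_snd, Prod.fst_add, Prod.snd_add,
        Pi.add_apply, Pi.smul_apply, smul_eq_mul] <;> ring
  have heq := hext.2 q1 (subset_convexHull ℝ _ h1) q2 (subset_convexHull ℝ _ h2) hseg
  rcases hne0 with h | h
  · have := congrArg (fun z : (ℕ → ℝ) × (ℕ → ℝ) × (ℕ → ℝ) => z.1 t0) heq.1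
    simp only [hq1] at this
    have hz : (-ε) * dx t0 = 0 := by linarith [this]
    rcases mul_eq_zero.1 hz with h' | h'
    · linarith
    · exact h h'
  · have := congrArg (fun z : (ℕ → ℝ) × (ℕ → ℝ) × (ℕ → ℝ) => z.2.1 t0) heq.1
    simp only [hq1] at this
    have hz : (-ε) * dy t0 = 0 := by linarith [this]
    rcases mul_eq_zero.1 hz with h' | h'
    · linarith
    · exact h h'

lemma ST_partner {T : ℕ} {s0 : ℝ} {Ls Us Lx Ux Ly Uy : ℕ → ℝ} {x y s : ℕ → ℝ}
    (hLx : ∀ t, 1 ≤ t → t ≤ T → 0 ≤ Lx t) (hLy : ∀ t, 1 ≤ t → t ≤ T → 0 ≤ Ly t)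
    (hp : Qwzmem T s0 Ls Us Lx Ux Ly Uy x y s) {t0 : ℕ}
    (hst : t0 ∈ subExtremeTimes T Lx Ux Ly Uy x y) :
    ∃ cx cy : ℝ, cx - cy = 1 ∧ |cx| ≤ 1 ∧ |cy| ≤ 1 ∧ (¬(cx = 0 ∧ cy = 0)) ∧
      (cx ≠ 0 → Lx t0 < x t0 ∧ x t0 < Ux t0 ∧ y t0 = 0 ∧ cy = 0) ∧
      (cy ≠ 0 → Ly t0 < y t0 ∧ y t0 < Uy t0 ∧ x t0 = 0 ∧ cx = 0) := by
  obtain ⟨h1, h2, hfrac⟩ := hst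
  obtain ⟨_, e2, _, _, e5, _, e7, _⟩ := hp.2.1 t0 h1 h2
  rcases hfrac with hy | hx
  · have hy0 : 0 < y t0 := lt_of_le_of_lt (hLy t0 h1 h2) hy.1
    have hx0 : x t0 = 0 := by
      rcases mul_eq_zero.1 e2 with h | h
      exacts [h, absurd h hy0.ne']
    exact ⟨0, -1, by norm_num, by norm_num, by norm_num, by norm_num,
      fun h => absurd rfl h, fun _ => ⟨hy.1, hy.2, hx0, rfl⟩⟩
  · have hx0 : 0 < x t0 := lt_of_le_of_lt (hLx t0 h1 h2) hx.1
    have hy0 : y t0 = 0 := by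
      rcases mul_eq_zero.1 e2 with h | h
      exacts [absurd h hx0.ne', h]
    exact ⟨1, 0, by norm_num, by norm_num, by norm_num, by norm_num,
      fun _ => ⟨hx.1, hx.2, hy0, rfl⟩, fun h => absurd rfl h⟩

lemma not_critical_not_extreme {T : ℕ} (hT : 1 ≤ T) {s0 : ℝ} {Ls Us Lx Ux Ly Uy : ℕ → ℝ}
    (hLx : ∀ t, 1 ≤ t → t ≤ T → 0 ≤ Lx t) (hLy : ∀ t, 1 ≤ t → t ≤ T → 0 ≤ Ly t)
    {p : (ℕ → ℝ) × (ℕ → ℝ) × (ℕ → ℝ)} (hp : p ∈ Qwz T s0 Ls Us Lx Ux Ly Uy)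
    (hnc : ¬ IsCriticalPoint T Ls Us Lx Ux Ly Uy p.1 p.2.1 p.2.2) :
    p ∉ Set.extremePoints ℝ (convexHull ℝ (Qwz T s0 Ls Us Lx Ux Ly Uy)) := by
  classical
  have hpm : Qwzmem T s0 Ls Us Lx Ux Ly Uy p.1 p.2.1 p.2.2 := hp
  rw [IsCriticalPoint, not_and_or] at hnc
  rcases hnc with hA | hB
  · -- some stock-extreme interval contains two sub-extreme periods
    push_neg at hA
    obtain ⟨a, haET, b, hbET, hab, hcons, hnsub⟩ := hA
    obtain ⟨u1, hu1, u2, hu2, hne12⟩ := hnsub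
    obtain ⟨t1, t2, ht1, ht2, hlt⟩ : ∃ t1 t2,
        t1 ∈ subExtremeTimes T Lx Ux Ly Uy p.1 p.2.1 ∩ Set.Ioc a b ∧
        t2 ∈ subExtremeTimes T Lx Ux Ly Uy p.1 p.2.1 ∩ Set.Ioc a b ∧ t1 < t2 := by
      rcases hne12.lt_or_gt with h | h
      exacts [⟨u1, u2, hu1, hu2, h⟩, ⟨u2, u1, hu2, hu1, h⟩]
    have h11 : 1 ≤ t1 := ht1.1.1
    have h1T : t1 ≤ T := ht1.1.2.1
    have h21 : 1 ≤ t2 := ht2.1.1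
    have h2T : t2 ≤ T := ht2.1.2.1
    have hbT : b ≤ T := ET_mem_le_T hbET
    have hIa1 : a < t1 := ht1.2.1
    have hIb1 : t1 ≤ b := ht1.2.2
    have hIa2 : a < t2 := ht2.2.1
    have hIb2 : t2 ≤ b := ht2.2.2
    obtain ⟨c1x, c1y, hc1, hb1x, hb1y, hnb1, h1x, h1y⟩ := ST_partner hLx hLy hpm ht1.1
    obtain ⟨c2x, c2y, hc2, hb2x, hb2y, hnb2, h2x, h2y⟩ := ST_partner hLx hLy hpm ht2.1
    set dx : ℕ → ℝ := fun t => if t = t1 then c1x else if t = t2 then -c2x else 0 with hdx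
    set dy : ℕ → ℝ := fun t => if t = t1 then c1y else if t = t2 then -c2y else 0 with hdy
    set ds : ℕ → ℝ := fun t => if t1 ≤ t ∧ t ≤ t2 - 1 then 1 else 0 with hds
    refine not_extreme_of_pert dx dy ds (pert_mem hT hpm dx dy ds ?_ ?_ ?_ ?_ ?_ ?_) ?_
    · intro t ht
      simp only [hdx, hdy, hds]
      rw [if_neg (show ¬ t = t1 by omega), if_neg (show ¬ t = t2 by omega),
        if_neg (show ¬ t = t1 by omega), if_neg (show ¬ t = t2 by omega),
        if_neg (show ¬ (t1 ≤ t ∧ t ≤ t2 - 1) by omega)]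
      exact ⟨rfl, rfl, rfl⟩
    · intro t h1 h2
      simp only [hdx, hdy, hds]
      split_ifs <;> first | omega | linarith [hc1, hc2]
    · intro t h1' h2' hnz
      by_cases e1 : t = t1
      · subst e1
        have hcne : c1x ≠ 0 := by simpa [hdx] using hnz
        obtain ⟨k1, k2, k3, k4⟩ := h1x hcne
        exact ⟨k1, k2, k3, by simp [hdy, k4]⟩
      · by_cases e2 : t = t2
        · subst e2
          have hcne : c2x ≠ 0 := by simpa [hdx, e1] using hnz
          obtain ⟨k1, k2, k3, k4⟩ := h2x hcne
          exact ⟨k1, k2, k3, by simp [hdy, e1, k4]⟩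
        · exact absurd (by simp [hdx, e1, e2]) hnz
    · intro t h1' h2' hnz
      by_cases e1 : t = t1
      · subst e1
        have hcne : c1y ≠ 0 := by simpa [hdy] using hnz
        obtain ⟨k1, k2, k3, k4⟩ := h1y hcne
        exact ⟨k1, k2, k3, by simp [hdx, k4]⟩
      · by_cases e2 : t = t2
        · subst e2
          have hcne : c2y ≠ 0 := by simpa [hdy, e1] using hnz
          obtain ⟨k1, k2, k3, k4⟩ := h2y hcne
          exact ⟨k1, k2, k3, by simp [hdx, e1, k4]⟩
        · exact absurd (by simp [hdy, e1, e2]) hnz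
    · intro t h1' h2' hnz
      simp only [hds] at hnz
      have hcond : t1 ≤ t ∧ t ≤ t2 - 1 := by
        by_contra h; rw [if_neg h] at hnz; exact hnz rfl
      have htET : t ∉ stockExtremeTimes T Ls Us p.2.2 := by
        intro hm
        have := hcons t hm (by omega)
        omega
      obtain ⟨_, _, k3, k4, _⟩ := hpm.2.1 t h1' h2'
      have hne' : ¬(p.2.2 t = Ls t ∨ p.2.2 t = Us t) :=
        fun h => htET (Or.inr ⟨h1', h2', h⟩)
      push_neg at hne'
      exact ⟨lt_of_le_of_ne k3 (Ne.symm hne'.1), lt_of_le_of_ne k4 hne'.2⟩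
    · intro t
      refine ⟨?_, ?_, ?_⟩ <;> simp only [hdx, hdy, hds] <;> split_ifs <;>
        first | assumption | (rw [abs_neg]; assumption) | norm_num
    · refine ⟨t1, ?_⟩
      by_cases h : c1x = 0
      · refine Or.inr ?_
        have hy' : c1y ≠ 0 := fun hcy => hnb1 ⟨h, hcy⟩
        simpa [hdy] using hy'
      · exact Or.inl (by simpa [hdx] using h)
  · -- the last interval contains a sub-extreme period
    obtain ⟨t1, hst, hMt, ht1T⟩ := Set.nonempty_iff_ne_empty.2 hB
    have h11 : 1 ≤ t1 := hst.1
    have h1T : t1 ≤ T := hst.2.1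
    obtain ⟨c1x, c1y, hc1, hb1x, hb1y, hnb1, h1x, h1y⟩ := ST_partner hLx hLy hpm hst
    set dx : ℕ → ℝ := fun t => if t = t1 then c1x else 0 with hdx
    set dy : ℕ → ℝ := fun t => if t = t1 then c1y else 0 with hdy
    set ds : ℕ → ℝ := fun t => if t1 ≤ t ∧ t ≤ T then 1 else 0 with hds
    refine not_extreme_of_pert dx dy ds (pert_mem hT hpm dx dy ds ?_ ?_ ?_ ?_ ?_ ?_) ?_
    · intro t ht
      simp only [hdx, hdy, hds]
      rw [if_neg (show ¬ t = t1 by omega), if_neg (show ¬ t = t1 by omega),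
        if_neg (show ¬ (t1 ≤ t ∧ t ≤ T) by omega)]
      exact ⟨rfl, rfl, rfl⟩
    · intro t h1 h2
      simp only [hdx, hdy, hds]
      split_ifs <;> first | omega | linarith [hc1]
    · intro t h1' h2' hnz
      by_cases e1 : t = t1
      · subst e1
        have hcne : c1x ≠ 0 := by simpa [hdx] using hnz
        obtain ⟨k1, k2, k3, k4⟩ := h1x hcne
        exact ⟨k1, k2, k3, by simp [hdy, k4]⟩
      · exact absurd (by simp [hdx, e1]) hnz
    · intro t h1' h2' hnz
      by_cases e1 : t = t1
      · subst e1
        have hcne : c1y ≠ 0 := by simpa [hdy] using hnz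
        obtain ⟨k1, k2, k3, k4⟩ := h1y hcne
        exact ⟨k1, k2, k3, by simp [hdx, k4]⟩
      · exact absurd (by simp [hdy, e1]) hnz
    · intro t h1' h2' hnz
      simp only [hds] at hnz
      have hcond : t1 ≤ t ∧ t ≤ T := by
        by_contra h; rw [if_neg h] at hnz; exact hnz rfl
      have htET : t ∉ stockExtremeTimes T Ls Us p.2.2 := by
        intro hm
        have := ET_le_sSup hm
        omega
      obtain ⟨_, _, k3, k4, _⟩ := hpm.2.1 t h1' h2'
      have hne' : ¬(p.2.2 t = Ls t ∨ p.2.2 t = Us t) :=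
        fun h => htET (Or.inr ⟨h1', h2', h⟩)
      push_neg at hne'
      exact ⟨lt_of_le_of_ne k3 (Ne.symm hne'.1), lt_of_le_of_ne k4 hne'.2⟩
    · intro t
      refine ⟨?_, ?_, ?_⟩ <;> simp only [hdx, hdy, hds] <;> split_ifs <;>
        first | assumption | norm_num
    · refine ⟨t1, ?_⟩
      by_cases h : c1x = 0
      · refine Or.inr ?_
        have hy' : c1y ≠ 0 := fun hcy => hnb1 ⟨h, hcy⟩
        simpa [hdy] using hy'
      · exact Or.inl (by simpa [hdx] using h)

/-- **Theorem**: the extreme points of `P(w̄,z̄) = conv(Q(w̄,z̄))` are exactly the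
critical points of `Q(w̄,z̄)`. -/
theorem extremePoints_Qwz_eq_criticalPoints
    (T : ℕ) (hT : 1 ≤ T) (s0 : ℝ) (Ls Us Lx Ux Ly Uy : ℕ → ℝ)
    (hnn : ∀ t, 1 ≤ t → t ≤ T →
      0 ≤ Ls t ∧ 0 ≤ Us t ∧ 0 ≤ Lx t ∧ 0 ≤ Ux t ∧ 0 ≤ Ly t ∧ 0 ≤ Uy t)
    (wb zb : ℕ → ℝ)
    (hwb : ∀ t, wb t = 0 ∨ wb t = 1) (hzb : ∀ t, zb t = 0 ∨ zb t = 1) :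
    Set.extremePoints ℝ (convexHull ℝ (Qwz T s0 Ls Us
        (primedBound Lx wb) (primedBound Ux wb)
        (primedBound Ly zb) (primedBound Uy zb))) =
      {p | p ∈ Qwz T s0 Ls Us
          (primedBound Lx wb) (primedBound Ux wb)
          (primedBound Ly zb) (primedBound Uy zb) ∧
        IsCriticalPoint T Ls Us
          (primedBound Lx wb) (primedBound Ux wb)
          (primedBound Ly zb) (primedBound Uy zb) p.1 p.2.1 p.2.2} := by
  have hLx' : ∀ t, 1 ≤ t → t ≤ T → 0 ≤ primedBound Lx wb t := by
    intro t h1 h2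
    unfold primedBound
    split_ifs
    · exact (hnn t h1 h2).2.2.1
    · exact le_refl 0
  have hLy' : ∀ t, 1 ≤ t → t ≤ T → 0 ≤ primedBound Ly zb t := by
    intro t h1 h2
    unfold primedBound
    split_ifs
    · exact (hnn t h1 h2).2.2.2.2.1
    · exact le_refl 0
  ext p
  constructor
  · intro h
    have hpQ := extremePoints_convexHull_subset h
    refine ⟨hpQ, ?_⟩
    by_contra hnc
    exact not_critical_not_extreme hT hLx' hLy' hpQ hnc h
  · rintro ⟨h1, h2⟩
    exact critical_mem_extremePoints hLx' hLy' h1 h2
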